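/- arXiv:2407.07491 — 5 statements merged into one kernel-verified Lean document; each statement's English description precedes it below -/
import Mathlib

section
/- Let Ω ⊆ ℂ be nonempty and T : Ω → L(H) a map into bounded operators on a Hilbert space H satisfying (w - z)·T(w)T(z) = T(w) - T(z) for all w, z ∈ Ω. Then there exists a closed linear relation A on H such that Ω ⊆ ρ(A) and (A - w)⁻¹ = T(w) for all w ∈ Ω. -/
/-- `T` is the (everywhere-defined bounded) resolvent of the linear relation `A` at `w`:
`T = (A - w)⁻¹` as a graph condition. -/
def IsResolventAt {H : Type*} [NormedAddCommGroup H] [InnerProductSpace ℂ H]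
    (A : Submodule ℂ (H × H)) (w : ℂ) (T : H →L[ℂ] H) : Prop :=
  ∀ f u : H, T f = u ↔ (u, f + w • u) ∈ A

theorem stmt1 {H : Type*} [NormedAddCommGroup H] [InnerProductSpace ℂ H] [CompleteSpace H]
    (Ω : Set ℂ) (hΩ : Ω.Nonempty) (T : ℂ → H →L[ℂ] H)
    (hT : ∀ w ∈ Ω, ∀ z ∈ Ω, (w - z) • (T w ∘L T z) = T w - T z) :
    ∃ A : Submodule ℂ (H × H), IsClosed (A : Set (H × H)) ∧
      ∀ w ∈ Ω, IsResolventAt A w (T w) := by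
  obtain ⟨w₀, hw₀⟩ := hΩ
  set Φ : H × H →L[ℂ] H :=
    ((T w₀).comp (ContinuousLinearMap.snd ℂ H H - w₀ • ContinuousLinearMap.fst ℂ H H)) -
      ContinuousLinearMap.fst ℂ H H with hΦ
  have hclosed : IsClosed ((LinearMap.ker (Φ : H × H →ₗ[ℂ] H) : Submodule ℂ (H × H)) : Set (H × H)) := by
    have : ((LinearMap.ker (Φ : H × H →ₗ[ℂ] H) : Submodule ℂ (H × H)) : Set (H × H)) = Φ ⁻¹' {0} := by
      ext x; simp [LinearMap.mem_ker]
    rw [this]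
    exact IsClosed.preimage Φ.continuous isClosed_singleton
  refine ⟨LinearMap.ker (Φ : H × H →ₗ[ℂ] H), hclosed, ?_⟩
  intro w hw f u
  have hmem : (u, f + w • u) ∈ LinearMap.ker (Φ : H × H →ₗ[ℂ] H) ↔ T w₀ (f + (w - w₀) • u) = u := by
    rw [LinearMap.mem_ker, ContinuousLinearMap.coe_coe]
    constructor
    · intro h
      have : Φ (u, f + w • u) = T w₀ (f + (w - w₀) • u) - u := by
        simp [hΦ, sub_smul]
        abel_nf
      rw [this] at h
      exact sub_eq_zero.mp h
    · intro h
      have : Φ (u, f + w • u) = T w₀ (f + (w - w₀) • u) - u := by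
        simp [hΦ, sub_smul]
        abel_nf
      rw [this, h, sub_self]
  rw [hmem]
  constructor
  · intro h
    have h1 := congrArg (fun S : H →L[ℂ] H => S f) (hT w₀ hw₀ w hw)
    simp only [ContinuousLinearMap.smul_apply, ContinuousLinearMap.coe_comp',
      Function.comp_apply, ContinuousLinearMap.sub_apply] at h1
    -- h1 : (w₀ - w) • T w₀ (T w f) = T w₀ f - T w f
    rw [map_add, map_smul, ← h]
    have h2 : (w - w₀) • T w₀ (T w f) = T w f - T w₀ f := by
      have h3 := congrArg Neg.neg h1
      rwa [← neg_smul, neg_sub, neg_sub] at h3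
    rw [h2]
    abel
  · intro h
    have h1 := congrArg (fun S : H →L[ℂ] H => S (f + (w - w₀) • u)) (hT w hw w₀ hw₀)
    simp only [ContinuousLinearMap.smul_apply, ContinuousLinearMap.coe_comp',
      Function.comp_apply, ContinuousLinearMap.sub_apply] at h1
    -- h1 : (w - w₀) • T w (T w₀ g) = T w g - T w₀ g  with g = f + (w-w₀)•u
    rw [h] at h1
    -- h1 : (w - w₀) • T w u = T w (f + (w-w₀)•u) - T w₀ (f + (w-w₀)•u)
    rw [map_add, map_smul] at h1
    -- h1 : (w - w₀) • T w u = T w f + (w - w₀) • T w u - u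
    replace h1 := h1.symm
    rw [sub_eq_iff_eq_add, add_comm ((w - w₀) • (T w) u) u] at h1
    exact add_right_cancel h1
end

section
/- Let ν be a finite complex Borel measure on ℝ, a, b ∈ ℂ, and q(ζ) = a + b·ζ + ∫ (1 + t·ζ)/(t - ζ) dν(t). If q is identically zero on ℂ \ ℝ, then a = 0, b = 0, and ν = 0. -/
open MeasureTheory

set_option linter.unusedSectionVars false
set_option maxHeartbeats 1000000
open Complex Filter Topology


noncomputable section QH

/-- The Cauchy kernel. -/
def cc (ζ : ℂ) (t : ℝ) : ℂ := ((t:ℂ) - ζ)⁻¹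
/-- The Herglotz kernel. -/
def kk (ζ : ℂ) (t : ℝ) : ℂ := (1 + t*ζ)/(t - ζ)

lemma sub_ne (t : ℝ) {ζ : ℂ} (hζ : ζ.im ≠ 0) : (t:ℂ) - ζ ≠ 0 := by
  intro h
  apply hζ
  have := congrArg Complex.im h
  simpa using this.symm

lemma cc_bound {ζ : ℂ} (hζ : ζ.im ≠ 0) (t : ℝ) : ‖cc ζ t‖ ≤ |ζ.im|⁻¹ := by
  rw [cc, norm_inv]
  apply inv_anti₀ (by positivity)
  calc |ζ.im| = |((t:ℂ) - ζ).im| := by simp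
    _ ≤ ‖(t:ℂ) - ζ‖ := Complex.abs_im_le_norm _
    _ = ‖(t:ℂ) - ζ‖ := rfl

lemma kk_eq {ζ : ℂ} (hζ : ζ.im ≠ 0) (t : ℝ) : kk ζ t = ζ + (1+ζ^2) * cc ζ t := by
  rw [kk, cc]
  field_simp [sub_ne t hζ]
  ring

lemma cc_sub {ζ η : ℂ} (hζ : ζ.im ≠ 0) (hη : η.im ≠ 0) (t : ℝ) :
    cc ζ t - cc η t = (ζ - η) * (cc ζ t * cc η t) := by
  rw [cc, cc]
  field_simp [sub_ne t hζ, sub_ne t hη]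
  ring

lemma kk_sub {ζ η : ℂ} (hζ : ζ.im ≠ 0) (hη : η.im ≠ 0) (t : ℝ) :
    kk ζ t - kk η t = (ζ - η) * ((1+(t:ℂ)^2) * (cc ζ t * cc η t)) := by
  rw [kk, kk, cc, cc]
  field_simp [sub_ne t hζ, sub_ne t hη]
  ring

lemma one_add_sq_ne (t : ℝ) : (1 + (t:ℂ)^2) ≠ 0 := by
  intro h
  have := congrArg Complex.re h
  simp [← Complex.ofReal_pow] at this
  nlinarith [sq_nonneg t]

lemma cc_i_mul (t : ℝ) : (1+(t:ℂ)^2) * (cc I t * cc (-I) t) = 1 := by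
  rw [cc, cc, ← mul_inv, show ((t:ℂ)-I)*((t:ℂ) - -I) = 1 + (t:ℂ)^2 by ring_nf; rw [Complex.I_sq]; ring,
    mul_inv_cancel₀ (one_add_sq_ne t)]

lemma cc_continuous {ζ : ℂ} (hζ : ζ.im ≠ 0) : Continuous (cc ζ) :=
  ((Complex.continuous_ofReal.sub continuous_const).inv₀ (fun t => sub_ne t hζ))

lemma kk_continuous {ζ : ℂ} (hζ : ζ.im ≠ 0) : Continuous (kk ζ) := by
  have : kk ζ = fun t => ζ + (1+ζ^2) * cc ζ t := funext (kk_eq hζ)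
  rw [this]
  exact continuous_const.add (continuous_const.mul (cc_continuous hζ))

end QH

noncomputable section QH2

/-- bounded continuous complex function on ℝ -/
def IsBC (f : ℝ → ℂ) : Prop := Continuous f ∧ ∃ C : ℝ, ∀ t, ‖f t‖ ≤ C

lemma IsBC.integrable {f : ℝ → ℂ} (hf : IsBC f) (μ : Measure ℝ) [IsFiniteMeasure μ] :
    Integrable f μ := by
  obtain ⟨hc, C, hC⟩ := hf
  exact ⟨hc.aestronglyMeasurable, HasFiniteIntegral.of_bounded (C := C) (.of_forall hC)⟩

lemma IsBC.add {f g : ℝ → ℂ} (hf : IsBC f) (hg : IsBC g) : IsBC (fun t => f t + g t) := by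
  obtain ⟨hc, C, hC⟩ := hf; obtain ⟨hc', C', hC'⟩ := hg
  exact ⟨hc.add hc', C + C', fun t => (norm_add_le _ _).trans (add_le_add (hC t) (hC' t))⟩

lemma IsBC.smul {f : ℝ → ℂ} (c : ℂ) (hf : IsBC f) : IsBC (fun t => c * f t) := by
  obtain ⟨hc, C, hC⟩ := hf
  exact ⟨continuous_const.mul hc, ‖c‖ * C, fun t => by
    rw [norm_mul]
    exact mul_le_mul_of_nonneg_left (hC t) (norm_nonneg c)⟩

lemma IsBC.sub {f g : ℝ → ℂ} (hf : IsBC f) (hg : IsBC g) : IsBC (fun t => f t - g t) := by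
  have := hf.add (hg.smul (-1))
  simpa [sub_eq_add_neg] using this

lemma IsBC.const (c : ℂ) : IsBC (fun _ => c) := ⟨continuous_const, ‖c‖, fun _ => le_rfl⟩

lemma IsBC.congr {f g : ℝ → ℂ} (hf : IsBC f) (h : ∀ t, f t = g t) : IsBC g := by
  have : f = g := funext h
  rwa [← this]

variable (ν₁ ν₂ ν₃ ν₄ : Measure ℝ)

/-- the complex functional attached to the 4 measures -/
def LL (f : ℝ → ℂ) : ℂ :=
  ((∫ t : ℝ, f t ∂ν₁) - ∫ t : ℝ, f t ∂ν₂) +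
    Complex.I * ((∫ t : ℝ, f t ∂ν₃) - ∫ t : ℝ, f t ∂ν₄)

variable [IsFiniteMeasure ν₁] [IsFiniteMeasure ν₂] [IsFiniteMeasure ν₃] [IsFiniteMeasure ν₄]

lemma LL_add {f g : ℝ → ℂ} (hf : IsBC f) (hg : IsBC g) :
    LL ν₁ ν₂ ν₃ ν₄ (fun t => f t + g t) = LL ν₁ ν₂ ν₃ ν₄ f + LL ν₁ ν₂ ν₃ ν₄ g := by
  unfold LL
  rw [integral_add (hf.integrable ν₁) (hg.integrable ν₁),
    integral_add (hf.integrable ν₂) (hg.integrable ν₂),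
    integral_add (hf.integrable ν₃) (hg.integrable ν₃),
    integral_add (hf.integrable ν₄) (hg.integrable ν₄)]
  ring

lemma LL_smul (c : ℂ) (f : ℝ → ℂ) :
    LL ν₁ ν₂ ν₃ ν₄ (fun t => c * f t) = c * LL ν₁ ν₂ ν₃ ν₄ f := by
  unfold LL
  simp_rw [← smul_eq_mul (a := c), integral_smul]
  simp only [smul_eq_mul]
  ring

lemma LL_sub {f g : ℝ → ℂ} (hf : IsBC f) (hg : IsBC g) :
    LL ν₁ ν₂ ν₃ ν₄ (fun t => f t - g t) = LL ν₁ ν₂ ν₃ ν₄ f - LL ν₁ ν₂ ν₃ ν₄ g := by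
  have h1 : (fun t => f t - g t) = fun t => f t + (-1 : ℂ) * g t := by funext t; ring
  rw [h1, LL_add ν₁ ν₂ ν₃ ν₄ hf (hg.smul (-1)), LL_smul]
  ring

lemma LL_tendsto (F : ℕ → ℝ → ℂ) (f : ℝ → ℂ) (C : ℝ)
    (hFc : ∀ n, Continuous (F n)) (hFb : ∀ n t, ‖F n t‖ ≤ C)
    (hlim : ∀ t, Tendsto (fun n => F n t) atTop (𝓝 (f t))) :
    Tendsto (fun n => LL ν₁ ν₂ ν₃ ν₄ (F n)) atTop (𝓝 (LL ν₁ ν₂ ν₃ ν₄ f)) := by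
  have key : ∀ (μ : Measure ℝ), IsFiniteMeasure μ →
      Tendsto (fun n => ∫ t : ℝ, F n t ∂μ) atTop (𝓝 (∫ t : ℝ, f t ∂μ)) := by
    intro μ hμ
    exact tendsto_integral_of_dominated_convergence (fun _ => C)
      (fun n => (hFc n).aestronglyMeasurable)
      (integrable_const C)
      (fun n => .of_forall (hFb n))
      (.of_forall hlim)
  have h1 := key ν₁ ‹_›; have h2 := key ν₂ ‹_›; have h3 := key ν₃ ‹_›; have h4 := key ν₄ ‹_›
  unfold LL
  exact ((h1.sub h2).add ((tendsto_const_nhds (x := Complex.I)).mul (h3.sub h4)))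

end QH2

noncomputable section QH3

lemma isBC_cc {ζ : ℂ} (hζ : ζ.im ≠ 0) : IsBC (cc ζ) :=
  ⟨cc_continuous hζ, |ζ.im|⁻¹, cc_bound hζ⟩

lemma isBC_kk {ζ : ℂ} (hζ : ζ.im ≠ 0) : IsBC (kk ζ) :=
  (((isBC_cc hζ).smul (1+ζ^2)).add (IsBC.const ζ)).congr
    (fun t => by rw [kk_eq hζ t]; ring)

/-- the two-kernel function -/
def g2 (ζ η : ℂ) (t : ℝ) : ℂ := (1+(t:ℂ)^2) * (cc ζ t * cc η t)

lemma g2_eq {ζ η : ℂ} (hζ : ζ.im ≠ 0) (hη : η.im ≠ 0) (hne : ζ ≠ η) (t : ℝ) :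
    g2 ζ η t = (ζ - η)⁻¹ * (kk ζ t - kk η t) := by
  rw [kk_sub hζ hη t, ← mul_assoc, inv_mul_cancel₀ (sub_ne_zero.mpr hne), one_mul, g2]

lemma isBC_g2 {ζ η : ℂ} (hζ : ζ.im ≠ 0) (hη : η.im ≠ 0) (hne : ζ ≠ η) : IsBC (g2 ζ η) :=
  (((isBC_kk hζ).sub (isBC_kk hη)).smul (ζ - η)⁻¹).congr
    (fun t => (g2_eq hζ hη hne t).symm)

variable (ν₁ ν₂ ν₃ ν₄ : Measure ℝ)
variable [IsFiniteMeasure ν₁] [IsFiniteMeasure ν₂] [IsFiniteMeasure ν₃] [IsFiniteMeasure ν₄]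

lemma phase1 (a b : ℂ)
    (hq : ∀ ζ : ℂ, ζ.im ≠ 0 → a + b * ζ + LL ν₁ ν₂ ν₃ ν₄ (kk ζ) = 0) :
    a = 0 ∧ b = 0 ∧ LL ν₁ ν₂ ν₃ ν₄ (fun _ => 1) = 0 ∧
      ∀ ζ : ℂ, ζ.im ≠ 0 → LL ν₁ ν₂ ν₃ ν₄ (cc ζ) = 0 := by
  -- two-point identity
  have E2 : ∀ ζ η : ℂ, ζ.im ≠ 0 → η.im ≠ 0 → ζ ≠ η →
      b + LL ν₁ ν₂ ν₃ ν₄ (g2 ζ η) = 0 := by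
    intro ζ η hζ hη hne
    have h1 := hq ζ hζ
    have h2 := hq η hη
    have hsub : LL ν₁ ν₂ ν₃ ν₄ (kk ζ) - LL ν₁ ν₂ ν₃ ν₄ (kk η)
        = (ζ - η) * LL ν₁ ν₂ ν₃ ν₄ (g2 ζ η) := by
      rw [← LL_sub ν₁ ν₂ ν₃ ν₄ (isBC_kk hζ) (isBC_kk hη), ← LL_smul ν₁ ν₂ ν₃ ν₄ (ζ - η)]
      congr 1
      funext t
      rw [kk_sub hζ hη t, g2]
    have hz : (ζ - η) * (b + LL ν₁ ν₂ ν₃ ν₄ (g2 ζ η)) = 0 := by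
      have : (a + b * ζ + LL ν₁ ν₂ ν₃ ν₄ (kk ζ)) - (a + b * η + LL ν₁ ν₂ ν₃ ν₄ (kk η)) = 0 := by
        rw [h1, h2]; ring
      calc (ζ - η) * (b + LL ν₁ ν₂ ν₃ ν₄ (g2 ζ η))
          = b * (ζ - η) + (ζ - η) * LL ν₁ ν₂ ν₃ ν₄ (g2 ζ η) := by ring
        _ = b * (ζ - η) + (LL ν₁ ν₂ ν₃ ν₄ (kk ζ) - LL ν₁ ν₂ ν₃ ν₄ (kk η)) := by rw [hsub]
        _ = (a + b * ζ + LL ν₁ ν₂ ν₃ ν₄ (kk ζ)) - (a + b * η + LL ν₁ ν₂ ν₃ ν₄ (kk η)) := by ring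
        _ = 0 := this
    exact (mul_eq_zero.mp hz).resolve_left (sub_ne_zero.mpr hne)
  -- three-point identity
  have E3 : ∀ ζ η θ : ℂ, ζ.im ≠ 0 → η.im ≠ 0 → θ.im ≠ 0 → ζ ≠ η → ζ ≠ θ → η ≠ θ →
      LL ν₁ ν₂ ν₃ ν₄ (fun t => (1+(t:ℂ)^2) * (cc ζ t * cc η t * cc θ t)) = 0 := by
    intro ζ η θ hζ hη hθ hζη hζθ hηθ
    have h1 := E2 ζ θ hζ hθ hζθ
    have h2 := E2 η θ hη hθ hηθ
    have hsub : LL ν₁ ν₂ ν₃ ν₄ (g2 ζ θ) - LL ν₁ ν₂ ν₃ ν₄ (g2 η θ)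
        = (ζ - η) * LL ν₁ ν₂ ν₃ ν₄ (fun t => (1+(t:ℂ)^2) * (cc ζ t * cc η t * cc θ t)) := by
      rw [← LL_sub ν₁ ν₂ ν₃ ν₄ (isBC_g2 hζ hθ hζθ) (isBC_g2 hη hθ hηθ),
        ← LL_smul ν₁ ν₂ ν₃ ν₄ (ζ - η)]
      congr 1
      funext t
      rw [g2, g2]
      linear_combination (1+(t:ℂ)^2) * cc θ t * (cc_sub hζ hη t)
    have hz : (ζ - η) * LL ν₁ ν₂ ν₃ ν₄ (fun t => (1+(t:ℂ)^2) * (cc ζ t * cc η t * cc θ t)) = 0 := by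
      rw [← hsub]
      have : b + LL ν₁ ν₂ ν₃ ν₄ (g2 ζ θ) = b + LL ν₁ ν₂ ν₃ ν₄ (g2 η θ) := by rw [h1, h2]
      linear_combination this
    exact (mul_eq_zero.mp hz).resolve_left (sub_ne_zero.mpr hζη)
  -- Cauchy transform vanishes away from ±i
  have E5 : ∀ θ : ℂ, θ.im ≠ 0 → θ ≠ I → θ ≠ -I → LL ν₁ ν₂ ν₃ ν₄ (cc θ) = 0 := by
    intro θ hθ h1 h2
    have := E3 I (-I) θ (by simp) (by simp) hθ (by simp [Complex.ext_iff]; norm_num)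
      (Ne.symm h1) (Ne.symm h2)
    rw [show (fun t : ℝ => (1+(t:ℂ)^2) * (cc I t * cc (-I) t * cc θ t)) = cc θ from
      funext fun t : ℝ => by linear_combination cc θ t * cc_i_mul t] at this
    exact this
  -- Cauchy transform vanishes everywhere
  have Czero : ∀ θ : ℂ, θ.im ≠ 0 → LL ν₁ ν₂ ν₃ ν₄ (cc θ) = 0 := by
    intro θ hθ
    by_cases hbig : 1 ≤ |θ.im|
    · -- approximate by r n • θ
      set r : ℕ → ℝ := fun n => 1 + 1/(n+1) with hr
      set F : ℕ → ℝ → ℂ := fun n => cc ((r n : ℂ) * θ) with hF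
      have hfac : ∀ n : ℕ, (1:ℝ) < r n := by
        intro n
        have : (0:ℝ) < 1/((n:ℝ)+1) := by positivity
        simp only [hr]
        linarith
      have him : ∀ n : ℕ, ((r n : ℂ) * θ).im = r n * θ.im := fun n => by
        simp [Complex.im_ofReal_mul]
      have himne : ∀ n : ℕ, ((r n : ℂ) * θ).im ≠ 0 := by
        intro n
        rw [him n]
        exact mul_ne_zero (by linarith [hfac n]) hθ
      have habs : ∀ n : ℕ, 1 < |((r n : ℂ) * θ).im| := by
        intro n
        rw [him n, abs_mul, abs_of_pos (by linarith [hfac n] : (0:ℝ) < r n)]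
        nlinarith [hfac n, abs_nonneg θ.im]
      have hzero : ∀ n : ℕ, LL ν₁ ν₂ ν₃ ν₄ (F n) = 0 := by
        intro n
        apply E5 _ (himne n)
        · intro h
          have := habs n
          rw [h] at this
          simp at this
        · intro h
          have := habs n
          rw [h] at this
          simp at this
      have hb : ∀ n t, ‖F n t‖ ≤ 1 := by
        intro n t
        refine (cc_bound (himne n) t).trans ?_
        rw [inv_le_one_iff₀]
        right; exact le_of_lt (habs n)
      have hptw : ∀ t : ℝ, Tendsto (fun n => F n t) atTop (𝓝 (cc θ t)) := by
        intro t
        have h0r : Tendsto r atTop (𝓝 1) := by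
          have h00 := tendsto_one_div_add_atTop_nhds_zero_nat (𝕜 := ℝ)
          have := (tendsto_const_nhds (x := (1:ℝ))).add h00
          simpa [hr] using this
        have h0 : Tendsto (fun n : ℕ => ((r n : ℝ) : ℂ)) atTop (𝓝 1) := by
          have := (Complex.continuous_ofReal.tendsto 1).comp h0r
          simpa [Function.comp_def] using this
        have h1 : Tendsto (fun n : ℕ => (t:ℂ) - (r n : ℂ) * θ) atTop
            (𝓝 ((t:ℂ) - θ)) := by
          have := (tendsto_const_nhds (x := (t:ℂ))).sub (h0.mul (tendsto_const_nhds (x := θ)))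
          simpa using this
        exact h1.inv₀ (sub_ne t hθ)
      have hcont : ∀ n, Continuous (F n) := fun n => cc_continuous (himne n)
      have := LL_tendsto ν₁ ν₂ ν₃ ν₄ F (cc θ) 1 hcont hb hptw
      rw [show (fun n => LL ν₁ ν₂ ν₃ ν₄ (F n)) = (fun _ => 0) from funext hzero] at this
      exact (tendsto_nhds_unique tendsto_const_nhds this).symm
    · push_neg at hbig
      apply E5 θ hθ
      · intro h; rw [h] at hbig; simp at hbig
      · intro h; rw [h] at hbig; simp at hbig
  -- b = 0
  have hbz : b = 0 := by
    set y : ℕ → ℝ := fun n => (n:ℝ) + 2 with hy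
    have hy1 : ∀ n, (1:ℝ) ≤ y n := by
      intro n
      have : (0:ℝ) ≤ (n:ℝ) := Nat.cast_nonneg n
      simp only [hy]
      linarith
    set ζ : ℕ → ℂ := fun n => (y n : ℂ) * I with hζ
    have him : ∀ n, (ζ n).im = y n := by
      intro n
      simp [hζ, Complex.im_ofReal_mul]
    have himne : ∀ n, (ζ n).im ≠ 0 := fun n => by rw [him n]; linarith [hy1 n]
    have himne' : ∀ n, (-(ζ n)).im ≠ 0 := fun n => by
      rw [Complex.neg_im, him n]; intro h; have := hy1 n; linarith
    have hne : ∀ n, ζ n ≠ -(ζ n) := by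
      intro n h
      have h2 : (ζ n).im = (-(ζ n)).im := by rw [← h]
      rw [Complex.neg_im, him n] at h2
      have := hy1 n
      linarith
    set F : ℕ → ℝ → ℂ := fun n => g2 (ζ n) (-(ζ n)) with hF
    have hconst : ∀ n, LL ν₁ ν₂ ν₃ ν₄ (F n) = -b := by
      intro n
      have := E2 (ζ n) (-(ζ n)) (himne n) (himne' n) (hne n)
      simp only [hF]
      linear_combination this
    have hval : ∀ n t, F n t = (((1+t^2)/(t^2+(y n)^2) : ℝ) : ℂ) := by
      intro n t
      have hprod : ((t:ℂ) - ζ n) * ((t:ℂ) - -(ζ n)) = (((t^2+(y n)^2 : ℝ)) : ℂ) := by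
        simp only [hζ]
        push_cast
        ring_nf
        rw [Complex.I_sq]
        ring
      simp only [hF, g2, cc, ← mul_inv, hprod]
      push_cast
      ring
    have hb : ∀ n t, ‖F n t‖ ≤ 1 := by
      intro n t
      rw [hval n t, Complex.norm_real, Real.norm_eq_abs, abs_div]
      have h2 : (0:ℝ) < t^2 + (y n)^2 := by nlinarith [hy1 n]
      rw [_root_.abs_of_nonneg (by positivity : (0:ℝ) ≤ 1 + t^2), _root_.abs_of_pos h2, div_le_one h2]
      nlinarith [hy1 n]
    have hptw : ∀ t : ℝ, Tendsto (fun n => F n t) atTop (𝓝 0) := by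
      intro t
      have key : Tendsto (fun n : ℕ => (1+t^2)/(t^2+(y n)^2)) atTop (𝓝 0) := by
        apply squeeze_zero (fun n => by positivity)
          (g := fun n : ℕ => (1+t^2) * (1/((n:ℝ)+1)))
        · intro n
          rw [div_eq_mul_one_div]
          apply mul_le_mul_of_nonneg_left _ (by positivity)
          apply div_le_div_of_nonneg_left one_pos.le (by positivity)
          have : ((n:ℝ)+1) ≤ (y n)^2 := by
            simp only [hy]
            nlinarith [Nat.cast_nonneg (α := ℝ) n]
          nlinarith [sq_nonneg t]
        · have := tendsto_one_div_add_atTop_nhds_zero_nat (𝕜 := ℝ)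
          have h2 := this.const_mul (1+t^2)
          simpa using h2
      have := (Complex.continuous_ofReal.tendsto 0).comp key
      simp only [Function.comp, Complex.ofReal_zero] at this
      convert this using 2 with n
      exact hval n _
    have := LL_tendsto ν₁ ν₂ ν₃ ν₄ F 0 1
      (fun n => ((isBC_g2 (himne n) (himne' n) (hne n)).1)) hb hptw
    rw [show (fun n => LL ν₁ ν₂ ν₃ ν₄ (F n)) = (fun _ => -b) from funext hconst] at this
    have h0 : LL ν₁ ν₂ ν₃ ν₄ (0 : ℝ → ℂ) = 0 := by
      simp [LL]
    rw [h0] at this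
    have := tendsto_nhds_unique tendsto_const_nhds this
    linear_combination -this
  -- the decomposed equation
  have hdec : ∀ ζ : ℂ, ζ.im ≠ 0 →
      a + b * ζ + (ζ * LL ν₁ ν₂ ν₃ ν₄ (fun _ => 1) + (1+ζ^2) * LL ν₁ ν₂ ν₃ ν₄ (cc ζ)) = 0 := by
    intro ζ hζ
    have h1 := hq ζ hζ
    have h2 : LL ν₁ ν₂ ν₃ ν₄ (kk ζ)
        = ζ * LL ν₁ ν₂ ν₃ ν₄ (fun _ => 1) + (1+ζ^2) * LL ν₁ ν₂ ν₃ ν₄ (cc ζ) := by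
      have e1 : kk ζ = fun t => ζ * (fun _ : ℝ => (1:ℂ)) t + (1+ζ^2) * cc ζ t := by
        funext t
        simp only
        rw [kk_eq hζ t]
        ring
      rw [e1, LL_add ν₁ ν₂ ν₃ ν₄ ((IsBC.const 1).smul ζ) ((isBC_cc hζ).smul (1+ζ^2)),
        LL_smul, LL_smul]
    rw [← h2]
    exact h1
  have h2i := hdec (2*I) (by simp)
  have h3i := hdec (3*I) (by simp)
  rw [Czero (2*I) (by simp)] at h2i
  rw [Czero (3*I) (by simp)] at h3i
  rw [hbz] at h2i h3i
  have hM : LL ν₁ ν₂ ν₃ ν₄ (fun _ => 1) = 0 := by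
    have hsub : (LL ν₁ ν₂ ν₃ ν₄ (fun _ => 1)) * I = 0 := by linear_combination h3i - h2i
    have hI : (I : ℂ) ≠ 0 := I_ne_zero
    exact (mul_eq_zero.mp hsub).resolve_right hI
  have ha : a = 0 := by
    rw [hM] at h2i
    linear_combination h2i
  exact ⟨ha, hbz, hM, Czero⟩

end QH3

noncomputable section QH4

open OnePoint

/-- the Cauchy kernel as a continuous map on the one-point compactification -/
def Kc (ζ : ℂ) (hζ : ζ.im ≠ 0) : C(OnePoint ℝ, ℂ) :=
  OnePoint.continuousMapMk ⟨cc ζ, cc_continuous hζ⟩ 0 (by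
    rw [Filter.coclosedCompact_eq_cocompact]
    rw [tendsto_zero_iff_norm_tendsto_zero]
    have h1 : Tendsto (fun t : ℝ => |t| - ‖ζ‖) (cocompact ℝ) atTop := by
      have := tendsto_norm_cocompact_atTop (E := ℝ)
      exact tendsto_atTop_add_const_right _ (-‖ζ‖) this
    have h2 : Tendsto (fun t : ℝ => ‖(t:ℂ) - ζ‖) (cocompact ℝ) atTop := by
      apply tendsto_atTop_mono _ h1
      intro t
      calc |t| - ‖ζ‖ = ‖(t:ℂ)‖ - ‖ζ‖ := by rw [Complex.norm_real, Real.norm_eq_abs]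
        _ ≤ ‖(t:ℂ) - ζ‖ := norm_sub_norm_le _ _
    have h3 := h2.inv_tendsto_atTop
    convert h3 using 2 with t
    simp [cc, ContinuousMap.coe_mk])

@[simp] lemma Kc_coe (ζ : ℂ) (hζ : ζ.im ≠ 0) (t : ℝ) : Kc ζ hζ ↑t = cc ζ t := rfl

@[simp] lemma Kc_infty (ζ : ℂ) (hζ : ζ.im ≠ 0) : Kc ζ hζ ∞ = 0 := rfl

/-- generating set -/
def Gset : Set C(OnePoint ℝ, ℂ) := {1} ∪ {f | ∃ ζ : ℂ, ∃ hζ : ζ.im ≠ 0, f = Kc ζ hζ}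

/-- the span of the generating set -/
def Wsub : Submodule ℂ C(OnePoint ℝ, ℂ) := Submodule.span ℂ Gset

/-- closure of the span -/
def Wc : Submodule ℂ C(OnePoint ℝ, ℂ) := (Wsub).topologicalClosure

lemma Wc_closed : IsClosed (Wc : Set C(OnePoint ℝ, ℂ)) := Submodule.isClosed_topologicalClosure _

lemma W_le_Wc : Wsub ≤ Wc := Submodule.le_topologicalClosure _

lemma one_mem_W : (1 : C(OnePoint ℝ, ℂ)) ∈ Wsub :=
  Submodule.subset_span (Or.inl rfl)

lemma Kc_mem_W (ζ : ℂ) (hζ : ζ.im ≠ 0) : Kc ζ hζ ∈ Wsub :=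
  Submodule.subset_span (Or.inr ⟨ζ, hζ, rfl⟩)

/-- star of a kernel -/
lemma star_Kc (ζ : ℂ) (hζ : ζ.im ≠ 0) :
    star (Kc ζ hζ) = Kc ((starRingEnd ℂ) ζ) (by simpa using hζ) := by
  ext x
  induction x using OnePoint.rec with
  | infty => simp [ContinuousMap.star_apply]
  | coe t =>
    simp only [ContinuousMap.star_apply, Kc_coe, cc]
    simp [star_inv₀, star_sub, Complex.star_def, Complex.conj_ofReal]

lemma star_mem_W {f : C(OnePoint ℝ, ℂ)} (hf : f ∈ Wsub) : star f ∈ Wsub := by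
  induction hf using Submodule.span_induction with
  | mem g hg =>
    rcases hg with h1 | ⟨ζ, hζ, rfl⟩
    · rw [Set.mem_singleton_iff.mp h1]
      simpa using one_mem_W
    · rw [star_Kc]
      exact Kc_mem_W _ _
  | zero => simpa using Wsub.zero_mem
  | add f g _ _ hf hg => rw [star_add]; exact Wsub.add_mem hf hg
  | smul c f _ hf =>
    rw [star_smul]
    exact Wsub.smul_mem _ hf

lemma star_mem_Wc {f : C(OnePoint ℝ, ℂ)} (hf : f ∈ Wc) : star f ∈ Wc := by
  have hsub : (Wsub : Set C(OnePoint ℝ, ℂ)) ⊆ star ⁻¹' (Wc : Set C(OnePoint ℝ, ℂ)) := by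
    intro g hg
    exact W_le_Wc (star_mem_W hg)
  have hcl : IsClosed (star ⁻¹' (Wc : Set C(OnePoint ℝ, ℂ))) :=
    Wc_closed.preimage continuous_star
  have := closure_minimal hsub hcl
  exact this hf

/-- product of two distinct kernels is in the span -/
lemma Kc_mul_Kc_ne {ζ η : ℂ} (hζ : ζ.im ≠ 0) (hη : η.im ≠ 0) (hne : ζ ≠ η) :
    Kc ζ hζ * Kc η hη ∈ Wsub := by
  have : Kc ζ hζ * Kc η hη = (ζ - η)⁻¹ • (Kc ζ hζ - Kc η hη) := by
    ext x
    induction x using OnePoint.rec with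
    | infty => simp
    | coe t =>
      simp only [ContinuousMap.mul_apply, ContinuousMap.smul_apply, ContinuousMap.sub_apply,
        Kc_coe, smul_eq_mul]
      rw [cc_sub hζ hη t]
      rw [← mul_assoc, inv_mul_cancel₀ (sub_ne_zero.mpr hne), one_mul]
  rw [this]
  exact Wsub.smul_mem _ (Wsub.sub_mem (Kc_mem_W _ _) (Kc_mem_W _ _))

/-- sup-norm distance of two kernels -/
lemma Kc_dist {ζ η : ℂ} (hζ : ζ.im ≠ 0) (hη : η.im ≠ 0) :
    ‖Kc ζ hζ - Kc η hη‖ ≤ ‖ζ - η‖ * (|ζ.im|⁻¹ * |η.im|⁻¹) := by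
  rw [ContinuousMap.norm_le _ (by positivity)]
  intro x
  induction x using OnePoint.rec with
  | infty =>
    simp only [ContinuousMap.sub_apply, Kc_infty, sub_zero, norm_zero]
    positivity
  | coe t =>
    simp only [ContinuousMap.sub_apply, Kc_coe]
    rw [cc_sub hζ hη t, norm_mul, norm_mul]
    gcongr
    · exact cc_bound hζ t
    · exact cc_bound hη t

/-- square of a kernel is in the closure -/
lemma Kc_sq_mem {ζ : ℂ} (hζ : ζ.im ≠ 0) : Kc ζ hζ * Kc ζ hζ ∈ Wc := by
  set r : ℕ → ℝ := fun n => 1 + 1/(n+1) with hr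
  have hfac : ∀ n : ℕ, (1:ℝ) < r n := by
    intro n
    have : (0:ℝ) < 1/((n:ℝ)+1) := by positivity
    simp only [hr]
    linarith
  have him : ∀ n : ℕ, ((r n : ℂ) * ζ).im = r n * ζ.im := fun n => Complex.im_ofReal_mul _ _
  have himne : ∀ n : ℕ, ((r n : ℂ) * ζ).im ≠ 0 := by
    intro n
    rw [him n]
    exact mul_ne_zero (by linarith [hfac n]) hζ
  have hne : ∀ n : ℕ, ζ ≠ (r n : ℂ) * ζ := by
    intro n h
    have : ζ.im = ((r n : ℂ) * ζ).im := by rw [← h]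
    rw [him n] at this
    have h2 : (r n - 1) * ζ.im = 0 := by linarith [this]
    rcases mul_eq_zero.mp h2 with h3 | h3
    · linarith [hfac n]
    · exact hζ h3
  have hmem : ∀ n : ℕ, Kc ζ hζ * Kc ((r n : ℂ) * ζ) (himne n) ∈ Wsub :=
    fun n => Kc_mul_Kc_ne hζ (himne n) (hne n)
  have htend : Tendsto (fun n => Kc ((r n : ℂ) * ζ) (himne n)) atTop (𝓝 (Kc ζ hζ)) := by
    rw [tendsto_iff_dist_tendsto_zero]
    apply squeeze_zero (fun n => dist_nonneg)
      (g := fun n : ℕ => ((1/((n:ℝ)+1)) * ‖ζ‖) * (|ζ.im|⁻¹ * |ζ.im|⁻¹))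
    · intro n
      rw [dist_eq_norm]
      refine (Kc_dist (himne n) hζ).trans ?_
      have h1 : ‖(r n : ℂ) * ζ - ζ‖ = (1/((n:ℝ)+1)) * ‖ζ‖ := by
        have : (r n : ℂ) * ζ - ζ = ((1/((n:ℝ)+1) : ℝ) : ℂ) * ζ := by
          simp only [hr]
          push_cast
          ring
        rw [this, norm_mul, Complex.norm_real, Real.norm_eq_abs,
          abs_of_pos (by positivity : (0:ℝ) < 1/((n:ℝ)+1))]
      rw [h1]
      have key : |((r n : ℂ)*ζ).im|⁻¹ ≤ |ζ.im|⁻¹ := by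
        apply inv_anti₀ (abs_pos.mpr hζ)
        rw [him n, abs_mul, abs_of_pos (by linarith [hfac n] : (0:ℝ) < r n)]
        nlinarith [hfac n, abs_nonneg ζ.im, abs_pos.mpr hζ]
      have h2 : (0:ℝ) ≤ 1/((n:ℝ)+1) * ‖ζ‖ := by positivity
      apply mul_le_mul_of_nonneg_left _ h2
      exact mul_le_mul_of_nonneg_right key (by positivity)
    · have h0 := tendsto_one_div_add_atTop_nhds_zero_nat (𝕜 := ℝ)
      have := (h0.mul_const ‖ζ‖).mul_const (|ζ.im|⁻¹ * |ζ.im|⁻¹)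
      simpa using this
  have htend2 : Tendsto (fun n => Kc ζ hζ * Kc ((r n : ℂ) * ζ) (himne n)) atTop
      (𝓝 (Kc ζ hζ * Kc ζ hζ)) := tendsto_const_nhds.mul htend
  exact mem_closure_of_tendsto htend2 (Eventually.of_forall fun n => hmem n)

lemma gen_mul_gen {f g : C(OnePoint ℝ, ℂ)} (hf : f ∈ Gset) (hg : g ∈ Gset) : f * g ∈ Wc := by
  rcases hf with h1 | ⟨ζ, hζ, rfl⟩
  · rw [Set.mem_singleton_iff.mp h1, one_mul]
    exact W_le_Wc (Submodule.subset_span hg)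
  · rcases hg with h1 | ⟨η, hη, rfl⟩
    · rw [Set.mem_singleton_iff.mp h1, mul_one]
      exact W_le_Wc (Kc_mem_W _ _)
    · by_cases hne : ζ = η
      · subst hne
        have h := Kc_sq_mem hζ
        convert h using 2
      · exact W_le_Wc (Kc_mul_Kc_ne hζ hη hne)

lemma gen_mul_W {g f : C(OnePoint ℝ, ℂ)} (hg : g ∈ Gset) (hf : f ∈ Wsub) : g * f ∈ Wc := by
  induction hf using Submodule.span_induction with
  | mem x hx => exact gen_mul_gen hg hx
  | zero => rw [mul_zero]; exact Wc.zero_mem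
  | add x y _ _ hx hy => rw [mul_add]; exact Wc.add_mem hx hy
  | smul c x _ hx => rw [mul_smul_comm]; exact Wc.smul_mem _ hx

lemma gen_mul_Wc {g f : C(OnePoint ℝ, ℂ)} (hg : g ∈ Gset) (hf : f ∈ Wc) : g * f ∈ Wc := by
  have hsub : (Wsub : Set C(OnePoint ℝ, ℂ)) ⊆ (g * ·) ⁻¹' (Wc : Set C(OnePoint ℝ, ℂ)) :=
    fun x hx => gen_mul_W hg hx
  have hcl : IsClosed ((g * ·) ⁻¹' (Wc : Set C(OnePoint ℝ, ℂ))) :=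
    Wc_closed.preimage (continuous_const.mul continuous_id)
  exact closure_minimal hsub hcl hf

lemma W_mul_Wc {w f : C(OnePoint ℝ, ℂ)} (hw : w ∈ Wsub) (hf : f ∈ Wc) : w * f ∈ Wc := by
  induction hw using Submodule.span_induction with
  | mem x hx => exact gen_mul_Wc hx hf
  | zero => rw [zero_mul]; exact Wc.zero_mem
  | add x y _ _ hx hy => rw [add_mul]; exact Wc.add_mem hx hy
  | smul c x _ hx => rw [smul_mul_assoc]; exact Wc.smul_mem _ hx

lemma Wc_mul_Wc {w f : C(OnePoint ℝ, ℂ)} (hw : w ∈ Wc) (hf : f ∈ Wc) : w * f ∈ Wc := by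
  have hsub : (Wsub : Set C(OnePoint ℝ, ℂ)) ⊆ (· * f) ⁻¹' (Wc : Set C(OnePoint ℝ, ℂ)) :=
    fun x hx => W_mul_Wc hx hf
  have hcl : IsClosed ((· * f) ⁻¹' (Wc : Set C(OnePoint ℝ, ℂ))) :=
    Wc_closed.preimage (continuous_id.mul continuous_const)
  exact closure_minimal hsub hcl hw

/-- the closure as a subalgebra -/
def Bsub : Subalgebra ℂ C(OnePoint ℝ, ℂ) where
  carrier := (Wc : Set C(OnePoint ℝ, ℂ))
  mul_mem' := by
    intro a b ha hb
    exact Wc_mul_Wc ha hb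
  one_mem' := W_le_Wc one_mem_W
  add_mem' := by
    intro a b ha hb
    exact Wc.add_mem ha hb
  zero_mem' := Wc.zero_mem
  algebraMap_mem' := by
    intro c
    rw [Algebra.algebraMap_eq_smul_one]
    exact Wc.smul_mem _ (W_le_Wc one_mem_W)

/-- the closure as a star subalgebra -/
def Balg : StarSubalgebra ℂ C(OnePoint ℝ, ℂ) :=
  { Bsub with
    star_mem' := by
      intro a ha
      exact star_mem_Wc ha }

lemma mem_Balg_iff (f : C(OnePoint ℝ, ℂ)) : f ∈ Balg ↔ f ∈ Wc := Iff.rfl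

lemma Balg_separates : Balg.SeparatesPoints := by
  intro x y hxy
  have him : (I:ℂ).im ≠ 0 := by simp
  refine ⟨Kc I him, ⟨Kc I him, (mem_Balg_iff _).mpr (W_le_Wc (Kc_mem_W I him)), rfl⟩, ?_⟩
  induction x using OnePoint.rec with
  | infty =>
    induction y using OnePoint.rec with
    | infty => exact absurd rfl hxy
    | coe t =>
      simp only [Kc_infty, Kc_coe, cc]
      intro h
      exact (inv_ne_zero (sub_ne t him)) h.symm
  | coe s =>
    induction y using OnePoint.rec with
    | infty =>
      simp only [Kc_infty, Kc_coe, cc]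
      exact inv_ne_zero (sub_ne s him)
    | coe t =>
      simp only [Kc_coe, cc]
      intro h
      apply hxy
      have h2 := inv_injective h
      have h3 : (s:ℂ) = (t:ℂ) := by linear_combination h2
      norm_cast at h3
      rw [h3]

lemma Wc_eq_top : ∀ f : C(OnePoint ℝ, ℂ), f ∈ Wc := by
  intro f
  have h := ContinuousMap.starSubalgebra_topologicalClosure_eq_top_of_separatesPoints
    Balg Balg_separates
  have h2 : f ∈ Balg.topologicalClosure := by rw [h]; trivial
  have h3 : f ∈ closure (Balg : Set C(OnePoint ℝ, ℂ)) := h2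
  have h4 : f ∈ closure (Wc : Set C(OnePoint ℝ, ℂ)) := h3
  rwa [IsClosed.closure_eq Wc_closed] at h4

section Functional

variable (ν₁ ν₂ ν₃ ν₄ : Measure ℝ)
variable [IsFiniteMeasure ν₁] [IsFiniteMeasure ν₂] [IsFiniteMeasure ν₃] [IsFiniteMeasure ν₄]

lemma isBC_comp (f : C(OnePoint ℝ, ℂ)) : IsBC (fun t : ℝ => f ↑t) :=
  ⟨f.continuous.comp OnePoint.continuous_coe, ‖f‖, fun t => f.norm_coe_le_norm _⟩

lemma LL_norm_le (f : ℝ → ℂ) (C : ℝ) (hC0 : 0 ≤ C) (hC : ∀ t, ‖f t‖ ≤ C) :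
    ‖LL ν₁ ν₂ ν₃ ν₄ f‖ ≤ C * (((ν₁ Set.univ).toReal + (ν₂ Set.univ).toReal) +
      ((ν₃ Set.univ).toReal + (ν₄ Set.univ).toReal)) := by
  have key : ∀ (μ : Measure ℝ), IsFiniteMeasure μ → ‖∫ t : ℝ, f t ∂μ‖ ≤ C * (μ Set.univ).toReal := by
    intro μ hμ
    exact norm_integral_le_of_norm_le_const (.of_forall hC)
  calc ‖LL ν₁ ν₂ ν₃ ν₄ f‖
      ≤ ‖(∫ t : ℝ, f t ∂ν₁) - ∫ t : ℝ, f t ∂ν₂‖ +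
        ‖Complex.I * ((∫ t : ℝ, f t ∂ν₃) - ∫ t : ℝ, f t ∂ν₄)‖ := norm_add_le _ _
    _ ≤ (‖∫ t : ℝ, f t ∂ν₁‖ + ‖∫ t : ℝ, f t ∂ν₂‖) +
        (‖∫ t : ℝ, f t ∂ν₃‖ + ‖∫ t : ℝ, f t ∂ν₄‖) := by
        rw [norm_mul, Complex.norm_I, one_mul]
        exact add_le_add (norm_sub_le _ _) (norm_sub_le _ _)
    _ ≤ (C * (ν₁ Set.univ).toReal + C * (ν₂ Set.univ).toReal) +
        (C * (ν₃ Set.univ).toReal + C * (ν₄ Set.univ).toReal) := by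
        exact add_le_add (add_le_add (key ν₁ ‹_›) (key ν₂ ‹_›)) (add_le_add (key ν₃ ‹_›) (key ν₄ ‹_›))
    _ = C * (((ν₁ Set.univ).toReal + (ν₂ Set.univ).toReal) +
        ((ν₃ Set.univ).toReal + (ν₄ Set.univ).toReal)) := by ring

lemma phi_closed : IsClosed {f : C(OnePoint ℝ, ℂ) | LL ν₁ ν₂ ν₃ ν₄ (fun t : ℝ => f ↑t) = 0} := by
  set Kr : ℝ := ((ν₁ Set.univ).toReal + (ν₂ Set.univ).toReal) +
      ((ν₃ Set.univ).toReal + (ν₄ Set.univ).toReal) with hKr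
  have hKr0 : 0 ≤ Kr := by positivity
  have hlip : LipschitzWith Kr.toNNReal (fun f : C(OnePoint ℝ, ℂ) =>
      LL ν₁ ν₂ ν₃ ν₄ (fun t : ℝ => f ↑t)) := by
    apply LipschitzWith.of_dist_le_mul
    intro f g
    rw [dist_eq_norm, dist_eq_norm, Real.coe_toNNReal _ hKr0]
    have hdiff : LL ν₁ ν₂ ν₃ ν₄ (fun t : ℝ => f ↑t) - LL ν₁ ν₂ ν₃ ν₄ (fun t : ℝ => g ↑t)
        = LL ν₁ ν₂ ν₃ ν₄ (fun t : ℝ => f ↑t - g ↑t) :=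
      (LL_sub ν₁ ν₂ ν₃ ν₄ (isBC_comp f) (isBC_comp g)).symm
    rw [hdiff]
    have hb : ∀ t : ℝ, ‖f ↑t - g ↑t‖ ≤ ‖f - g‖ := by
      intro t
      have := (f - g).norm_coe_le_norm (↑t : OnePoint ℝ)
      simpa using this
    have := LL_norm_le ν₁ ν₂ ν₃ ν₄ (fun t : ℝ => f ↑t - g ↑t) ‖f - g‖ (norm_nonneg _) hb
    rw [mul_comm] at this
    exact this
  have hcont := hlip.continuous
  exact isClosed_eq hcont continuous_const

lemma phase2 (hM : LL ν₁ ν₂ ν₃ ν₄ (fun _ => 1) = 0)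
    (hC : ∀ ζ : ℂ, ζ.im ≠ 0 → LL ν₁ ν₂ ν₃ ν₄ (cc ζ) = 0) :
    ∀ f : C(OnePoint ℝ, ℂ), LL ν₁ ν₂ ν₃ ν₄ (fun t : ℝ => f ↑t) = 0 := by
  set N : Set C(OnePoint ℝ, ℂ) := {f | LL ν₁ ν₂ ν₃ ν₄ (fun t : ℝ => f ↑t) = 0} with hN
  have hWN : (Wsub : Set C(OnePoint ℝ, ℂ)) ⊆ N := by
    intro f hf
    induction hf using Submodule.span_induction with
    | mem g hg =>
      rcases hg with h1 | ⟨ζ, hζ, rfl⟩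
      · rw [Set.mem_singleton_iff.mp h1]
        show LL ν₁ ν₂ ν₃ ν₄ (fun t : ℝ => (1 : C(OnePoint ℝ, ℂ)) ↑t) = 0
        simpa using hM
      · show LL ν₁ ν₂ ν₃ ν₄ (fun t : ℝ => Kc ζ hζ ↑t) = 0
        simpa using hC ζ hζ
    | zero =>
      show LL ν₁ ν₂ ν₃ ν₄ (fun t : ℝ => (0 : C(OnePoint ℝ, ℂ)) ↑t) = 0
      simp [LL]
    | add f g hfm hgm hf hg =>
      show LL ν₁ ν₂ ν₃ ν₄ (fun t : ℝ => (f + g) ↑t) = 0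
      have : (fun t : ℝ => (f + g) ↑t) = fun t : ℝ => f ↑t + g ↑t := rfl
      rw [this, LL_add ν₁ ν₂ ν₃ ν₄ (isBC_comp f) (isBC_comp g)]
      rw [hf, hg, add_zero]
    | smul c f hfm hf =>
      show LL ν₁ ν₂ ν₃ ν₄ (fun t : ℝ => (c • f) ↑t) = 0
      have : (fun t : ℝ => (c • f) ↑t) = fun t : ℝ => c * f ↑t := rfl
      rw [this, LL_smul, hf, mul_zero]
  intro f
  have h1 : (Wc : Set C(OnePoint ℝ, ℂ)) ⊆ N :=
    closure_minimal hWN (phi_closed ν₁ ν₂ ν₃ ν₄)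
  exact h1 (Wc_eq_top f)

end Functional

end QH4

noncomputable section QH5

open OnePoint Metric

lemma complex_split {r1 r2 r3 r4 : ℝ}
    (h : ((r1 : ℂ) - r2) + Complex.I * ((r3:ℂ) - r4) = 0) : r1 = r2 ∧ r3 = r4 := by
  have hre := congrArg Complex.re h
  have him := congrArg Complex.im h
  simp [Complex.add_re, Complex.add_im, Complex.mul_re, Complex.mul_im] at hre him
  constructor <;> linarith

variable (ν₁ ν₂ ν₃ ν₄ : Measure ℝ)
variable [IsFiniteMeasure ν₁] [IsFiniteMeasure ν₂] [IsFiniteMeasure ν₃] [IsFiniteMeasure ν₄]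

/-- equality of integrals of a real bump against the measure pairs -/
lemma integral_eq_of_all (hall : ∀ f : C(OnePoint ℝ, ℂ), LL ν₁ ν₂ ν₃ ν₄ (fun t : ℝ => f ↑t) = 0)
    (u : ℝ → ℝ) (hu : Continuous u)
    (hinf : Tendsto u (Filter.cocompact ℝ) (𝓝 0)) :
    (∫ t, u t ∂ν₁) = (∫ t, u t ∂ν₂) ∧ (∫ t, u t ∂ν₃) = (∫ t, u t ∂ν₄) := by
  set f : C(OnePoint ℝ, ℂ) := OnePoint.continuousMapMk
    ⟨fun t => ((u t : ℝ) : ℂ), Complex.continuous_ofReal.comp hu⟩ 0 (by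
      rw [Filter.coclosedCompact_eq_cocompact]
      have := (Complex.continuous_ofReal.tendsto 0).comp hinf
      simpa [Function.comp_def] using this) with hf
  have happ : ∀ t : ℝ, f ↑t = ((u t : ℝ) : ℂ) := fun t => rfl
  have h := hall f
  rw [show (fun t : ℝ => f ↑t) = (fun t : ℝ => ((u t : ℝ) : ℂ)) from funext happ] at h
  rw [LL] at h
  have e : ∀ (μ : Measure ℝ), ∫ t : ℝ, ((u t : ℝ) : ℂ) ∂μ = ((∫ t, u t ∂μ : ℝ) : ℂ) :=
    fun μ => integral_ofReal
  rw [e ν₁, e ν₂, e ν₃, e ν₄] at h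
  exact complex_split h

lemma measure_compact_eq (hall : ∀ f : C(OnePoint ℝ, ℂ), LL ν₁ ν₂ ν₃ ν₄ (fun t : ℝ => f ↑t) = 0)
    {K : Set ℝ} (hK : IsCompact K) :
    ν₁ K = ν₂ K ∧ ν₃ K = ν₄ K := by
  rcases K.eq_empty_or_nonempty with rfl | hne
  · simp
  -- bump functions
  set u : ℕ → ℝ → ℝ := fun n t => max 0 (1 - (n+1) * infDist t K) with hu
  have hucont : ∀ n, Continuous (u n) :=
    fun n => continuous_const.max (continuous_const.sub
      ((continuous_const.mul (continuous_infDist_pt K))))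
  have hub : ∀ n t, |u n t| ≤ 1 := by
    intro n t
    rw [abs_le]
    constructor
    · have : (0:ℝ) ≤ u n t := le_max_left _ _
      linarith
    · apply max_le (by norm_num)
      have h1 : (0:ℝ) ≤ (n+1 : ℝ) * infDist t K := by
        apply mul_nonneg (by positivity) infDist_nonneg
      linarith
  -- vanishing at infinity
  obtain ⟨R, hR⟩ := hK.isBounded.subset_closedBall (0:ℝ)
  have huinf : ∀ n, Tendsto (u n) (Filter.cocompact ℝ) (𝓝 0) := by
    intro n
    apply Tendsto.congr' _ tendsto_const_nhds
    have hmem : (Metric.closedBall (0:ℝ) (R+1))ᶜ ∈ Filter.cocompact ℝ :=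
      (isCompact_closedBall (0:ℝ) (R+1)).compl_mem_cocompact
    filter_upwards [hmem] with t ht
    have ht2 : R + 1 < |t| := by
      simp only [Set.mem_compl_iff, Metric.mem_closedBall, Real.dist_eq, sub_zero, not_le] at ht
      exact ht
    have hge : (1:ℝ) ≤ infDist t K := by
      by_contra hlt
      push_neg at hlt
      obtain ⟨y, hy, hdy⟩ := (infDist_lt_iff hne).mp hlt
      have : |y| ≤ R := by
        have := hR hy
        simpa [Real.dist_eq] using this
      have : |t| ≤ |t - y| + |y| := by
        calc |t| = |(t - y) + y| := by ring_nf
          _ ≤ |t - y| + |y| := abs_add_le _ _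
      rw [Real.dist_eq] at hdy
      linarith
    symm
    have h1 : 1 - ((n:ℝ)+1) * infDist t K ≤ 0 := by
      have : (1:ℝ) ≤ ((n:ℝ)+1) := by
        have : (0:ℝ) ≤ n := Nat.cast_nonneg n
        linarith
      nlinarith [infDist_nonneg (x := t) (s := K)]
    simp only [hu]
    exact max_eq_left h1
  -- pointwise convergence to the indicator
  have hptw : ∀ t, Tendsto (fun n => u n t) atTop (𝓝 (K.indicator (1 : ℝ → ℝ) t)) := by
    intro t
    by_cases ht : t ∈ K
    · have : ∀ n, u n t = 1 := by
        intro n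
        simp only [hu, infDist_zero_of_mem ht]
        norm_num
      rw [show (fun n => u n t) = (fun _ => (1:ℝ)) from funext this, Set.indicator_of_mem ht]
      exact tendsto_const_nhds
    · rw [Set.indicator_of_notMem ht]
      have hpos : 0 < infDist t K := (hK.isClosed.notMem_iff_infDist_pos hne).mp ht
      apply Tendsto.congr' _ tendsto_const_nhds
      rw [EventuallyEq, eventually_atTop]
      refine ⟨⌈(infDist t K)⁻¹⌉₊, fun n hn => ?_⟩
      symm
      simp only [hu]
      apply max_eq_left
      have h2 : (infDist t K)⁻¹ ≤ (n:ℝ) := le_trans (Nat.le_ceil _) (by exact_mod_cast hn)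
      have h3 : 1 ≤ (n:ℝ) * infDist t K := by
        calc (1:ℝ) = (infDist t K)⁻¹ * infDist t K := by
              rw [inv_mul_cancel₀ (ne_of_gt hpos)]
          _ ≤ (n:ℝ) * infDist t K := by
              apply mul_le_mul_of_nonneg_right h2 infDist_nonneg
      nlinarith [infDist_nonneg (x := t) (s := K)]
  -- integrals converge
  have hint : ∀ (μ : Measure ℝ), IsFiniteMeasure μ →
      Tendsto (fun n => ∫ t, u n t ∂μ) atTop (𝓝 ((μ K).toReal)) := by
    intro μ hμ
    have := tendsto_integral_of_dominated_convergence (μ := μ)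
      (F := fun n t => u n t) (f := fun t => K.indicator (1 : ℝ → ℝ) t)
      (bound := fun _ => 1)
      (fun n => (hucont n).aestronglyMeasurable)
      (integrable_const 1)
      (fun n => .of_forall (fun t => by simpa using hub n t))
      (.of_forall hptw)
    rwa [integral_indicator_one hK.measurableSet] at this
  have heq : ∀ n, (∫ t, u n t ∂ν₁) = (∫ t, u n t ∂ν₂) ∧
      (∫ t, u n t ∂ν₃) = (∫ t, u n t ∂ν₄) :=
    fun n => integral_eq_of_all ν₁ ν₂ ν₃ ν₄ hall (u n) (hucont n) (huinf n)
  constructor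
  · have h1 := hint ν₁ ‹_›
    have h2 := hint ν₂ ‹_›
    rw [show (fun n => ∫ t, u n t ∂ν₁) = (fun n => ∫ t, u n t ∂ν₂) from
      funext (fun n => (heq n).1)] at h1
    have := tendsto_nhds_unique h1 h2
    exact (ENNReal.toReal_eq_toReal_iff' (measure_ne_top _ _) (measure_ne_top _ _)).mp this
  · have h1 := hint ν₃ ‹_›
    have h2 := hint ν₄ ‹_›
    rw [show (fun n => ∫ t, u n t ∂ν₃) = (fun n => ∫ t, u n t ∂ν₄) from
      funext (fun n => (heq n).2)] at h1
    have := tendsto_nhds_unique h1 h2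
    exact (ENNReal.toReal_eq_toReal_iff' (measure_ne_top _ _) (measure_ne_top _ _)).mp this

lemma phase3 (hall : ∀ f : C(OnePoint ℝ, ℂ), LL ν₁ ν₂ ν₃ ν₄ (fun t : ℝ => f ↑t) = 0) :
    ν₁ = ν₂ ∧ ν₃ = ν₄ := by
  have hclosed : ∀ {F : Set ℝ}, IsClosed F → (ν₁ F = ν₂ F ∧ ν₃ F = ν₄ F) := by
    intro F hF
    have hdecomp : F = ⋃ n : ℕ, F ∩ Set.Icc (-(n:ℝ)) n := by
      ext t
      simp only [Set.mem_iUnion, Set.mem_inter_iff, Set.mem_Icc]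
      constructor
      · intro ht
        obtain ⟨n, hn⟩ := exists_nat_ge |t|
        exact ⟨n, ht, by cases abs_le.mp hn; constructor <;> linarith⟩
      · rintro ⟨n, hn, _⟩
        exact hn
    have hmono : Monotone (fun n : ℕ => F ∩ Set.Icc (-(n:ℝ)) n) := by
      intro m n hmn
      apply Set.inter_subset_inter_right
      apply Set.Icc_subset_Icc <;> · simp; exact_mod_cast hmn
    have hcpt : ∀ n : ℕ, IsCompact (F ∩ Set.Icc (-(n:ℝ)) n) :=
      fun n => isCompact_Icc.inter_left hF
    have key : ∀ (μ μ' : Measure ℝ), IsFiniteMeasure μ → IsFiniteMeasure μ' →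
        (∀ n : ℕ, μ (F ∩ Set.Icc (-(n:ℝ)) n) = μ' (F ∩ Set.Icc (-(n:ℝ)) n)) → μ F = μ' F := by
      intro μ μ' h h' hn
      have t1 := tendsto_measure_iUnion_atTop (μ := μ) hmono
      have t2 := tendsto_measure_iUnion_atTop (μ := μ') hmono
      rw [← hdecomp] at t1 t2
      exact tendsto_nhds_unique (t1.congr hn) t2
    constructor
    · exact key ν₁ ν₂ ‹_› ‹_› (fun n => (measure_compact_eq ν₁ ν₂ ν₃ ν₄ hall (hcpt n)).1)
    · exact key ν₃ ν₄ ‹_› ‹_› (fun n => (measure_compact_eq ν₁ ν₂ ν₃ ν₄ hall (hcpt n)).2)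
  have hgen : (inferInstance : MeasurableSpace ℝ) = MeasurableSpace.generateFrom {s : Set ℝ | IsClosed s} := by
    rw [BorelSpace.measurable_eq (α := ℝ), borel_eq_generateFrom_isClosed]
  constructor
  · exact MeasureTheory.ext_of_generate_finite _ hgen isPiSystem_isClosed
      (fun s hs => (hclosed hs).1) (hclosed isClosed_univ).1
  · exact MeasureTheory.ext_of_generate_finite _ hgen isPiSystem_isClosed
      (fun s hs => (hclosed hs).2) (hclosed isClosed_univ).2

end QH5

/-- Uniqueness of the data in the integral representation of quasi-Herglotz functions:
if `q(ζ) = a + bζ + ∫ (1+tζ)/(t-ζ) dν(t)` vanishes identically on `ℂ \ ℝ`, then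
`a = 0`, `b = 0` and `ν = 0`.  The finite complex Borel measure `ν` is encoded through
its Jordan decomposition `ν = ν₁ - ν₂ + i (ν₃ - ν₄)` into four finite nonnegative
measures, and `ν = 0` reads `ν₁ - ν₂ = 0` and `ν₃ - ν₄ = 0` setwise. -/
theorem stmt5 (ν₁ ν₂ ν₃ ν₄ : Measure ℝ)
    [IsFiniteMeasure ν₁] [IsFiniteMeasure ν₂] [IsFiniteMeasure ν₃] [IsFiniteMeasure ν₄]
    (a b : ℂ)
    (hq : ∀ ζ : ℂ, ζ.im ≠ 0 → a + b * ζ +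
      (((∫ t : ℝ, (1 + t * ζ) / (t - ζ) ∂ν₁) - ∫ t : ℝ, (1 + t * ζ) / (t - ζ) ∂ν₂) +
        Complex.I * ((∫ t : ℝ, (1 + t * ζ) / (t - ζ) ∂ν₃) -
          ∫ t : ℝ, (1 + t * ζ) / (t - ζ) ∂ν₄)) = 0) :
    a = 0 ∧ b = 0 ∧ ∀ s : Set ℝ, MeasurableSet s →
      (ν₁ s).toReal = (ν₂ s).toReal ∧ (ν₃ s).toReal = (ν₄ s).toReal := by
  have hq' : ∀ ζ : ℂ, ζ.im ≠ 0 → a + b * ζ + LL ν₁ ν₂ ν₃ ν₄ (kk ζ) = 0 := by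
    intro ζ hζ
    exact hq ζ hζ
  obtain ⟨ha, hb, hM, hC⟩ := phase1 ν₁ ν₂ ν₃ ν₄ a b hq'
  have hall := phase2 ν₁ ν₂ ν₃ ν₄ hM hC
  obtain ⟨h12, h34⟩ := phase3 ν₁ ν₂ ν₃ ν₄ hall
  exact ⟨ha, hb, fun s _ => ⟨by rw [h12], by rw [h34]⟩⟩
end

section
/- Let A be a self-adjoint operator on a Hilbert space H, φ, v ∈ H, φ_x(w) = (I + (w - i)(A - w)⁻¹)x the associated φ-fields, and suppose q : ρ(A) → ℂ satisfies (q(ζ) - q(-i))/(ζ + i) = ⟨φ_v(ζ), φ_φ(i)⟩ for all ζ ∈ ρ(A). Then (q(ζ) - q(conj w))/(ζ - conj w) = ⟨φ_v(ζ), φ_φ(w)⟩ for all ζ, w ∈ ρ(A) with ζ ≠ conj w. -/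
open ComplexConjugate

/-- If `q` satisfies the Q-function identity at the base point `-i`, then it satisfies
it at every pair of points: `(q(ζ) - q(conj w))/(ζ - conj w) = ⟨φ_v(ζ), φ_φ(w)⟩`.
The self-adjoint operator `A` is encoded by its resolvent family `R` on the
conjugation-invariant resolvent set `ρ ∋ ±i`, satisfying the resolvent identity and
`((A - w)⁻¹)* = (A - conj w)⁻¹`; the paper's inner product `⟨x, y⟩`, conjugate-linear in
the second argument, is Mathlib's `⟪y, x⟫`. -/
theorem stmt9 {H : Type*} [NormedAddCommGroup H] [InnerProductSpace ℂ H] [CompleteSpace H]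
    (ρ : Set ℂ) (R : ℂ → H →L[ℂ] H)
    (hres : ∀ w ∈ ρ, ∀ z ∈ ρ, (w - z) • (R w ∘L R z) = R w - R z)
    (hconj : ∀ w ∈ ρ, (conj w : ℂ) ∈ ρ)
    (hadj : ∀ w ∈ ρ, ContinuousLinearMap.adjoint (R w) = R (conj w))
    (hi : Complex.I ∈ ρ) (hmi : -Complex.I ∈ ρ)
    (v φ₀ : H) (φv φφ : ℂ → H)
    (hφv : ∀ w ∈ ρ, φv w = v + (w - Complex.I) • R w v)
    (hφφ : ∀ w ∈ ρ, φφ w = φ₀ + (w - Complex.I) • R w φ₀)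
    (q : ℂ → ℂ)
    (hq : ∀ ζ ∈ ρ, ζ ≠ -Complex.I →
      (q ζ - q (-Complex.I)) / (ζ + Complex.I) =
        (inner ℂ (φφ Complex.I) (φv ζ) : ℂ)) :
    ∀ ζ ∈ ρ, ∀ w ∈ ρ, ζ ≠ conj w →
      (q ζ - q (conj w)) / (ζ - conj w) = (inner ℂ (φφ w) (φv ζ) : ℂ) := by
  -- transition formula for φ-fields
  have keyφ : ∀ (x : H), ∀ a ∈ ρ, ∀ b ∈ ρ,
      x + (b - Complex.I) • R b x
        = (x + (a - Complex.I) • R a x) + (b - a) • R b (x + (a - Complex.I) • R a x) := by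
    intro x a ha b hb
    have h := congrArg (fun T : H →L[ℂ] H => T x) (hres b hb a ha)
    simp only [ContinuousLinearMap.smul_apply, ContinuousLinearMap.coe_comp',
      Function.comp_apply, ContinuousLinearMap.sub_apply] at h
    rw [map_add, map_smul, smul_add, smul_comm (b - a) (a - Complex.I), h]
    module
  have hφφI : φφ Complex.I = φ₀ := by
    rw [hφφ Complex.I hi]; simp
  intro ζ hζ w hw hne
  have hcw : (conj w : ℂ) ∈ ρ := hconj w hw
  -- moving R w across the inner product
  have hadjw : ∀ y : H, (inner ℂ (R w φ₀) y : ℂ) = inner ℂ φ₀ (R (conj w) y) := by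
    intro y
    have hRw : R w = ContinuousLinearMap.adjoint (R (conj w)) := by
      rw [hadj (conj w) hcw, Complex.conj_conj]
    rw [hRw, ContinuousLinearMap.adjoint_inner_left]
  have hconjwI : conj (w - Complex.I) = conj w + Complex.I := by
    simp [map_sub, Complex.conj_I, sub_neg_eq_add]
  -- expansion of ⟪φφ w, y⟫
  have E1 : ∀ y : H, (inner ℂ (φφ w) y : ℂ)
      = inner ℂ φ₀ y + inner ℂ φ₀ ((conj w + Complex.I) • R (conj w) y) := by
    intro y
    rw [hφφ w hw, inner_add_left, inner_smul_left, hadjw, hconjwI, inner_smul_right]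
  -- transition for φv from a to conj w
  have E2 : ∀ a ∈ ρ, φv (conj w) = φv a + (conj w - a) • R (conj w) (φv a) := by
    intro a ha
    have h := keyφ v a ha (conj w) hcw
    rw [← hφv a ha, ← hφv (conj w) hcw] at h
    exact h
  by_cases hcwI : (conj w : ℂ) = -Complex.I
  · -- w = I : this is exactly the hypothesis
    have hwI : w = Complex.I := by
      have := congrArg (conj : ℂ → ℂ) hcwI
      simpa [Complex.conj_conj, Complex.conj_I] using this
    have hζI : ζ ≠ -Complex.I := by rw [← hcwI]; exact hne
    have := hq ζ hζ hζI
    rw [hwI]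
    simpa [Complex.conj_I, sub_neg_eq_add] using this
  · by_cases hζI : ζ = -Complex.I
    · -- base point on the left: telescope via the adjoint
      subst hζI
      have e2 := E2 (-Complex.I) hmi
      have : ((conj w + Complex.I) • R (conj w) (φv (-Complex.I)) : H)
          = φv (conj w) - φv (-Complex.I) := by
        rw [e2]; simp [sub_neg_eq_add]
      have E := E1 (φv (-Complex.I))
      rw [this, inner_sub_right] at E
      have hq2 := hq (conj w) hcw hcwI
      rw [hφφI] at hq2
      rw [E, ← hq2]
      have h1 : conj w + Complex.I ≠ 0 := by
        intro h; apply hcwI; linear_combination h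
      have h2 : -Complex.I - conj w ≠ 0 := by
        intro h; apply hcwI; linear_combination -h
      field_simp
      ring
    · -- general case
      have e2 := E2 ζ hζ
      have hcwζ : (conj w - ζ : ℂ) ≠ 0 := sub_ne_zero.mpr fun h => hne h.symm
      have hR : R (conj w) (φv ζ) = (conj w - ζ)⁻¹ • (φv (conj w) - φv ζ) := by
        rw [e2]
        rw [show φv ζ + (conj w - ζ) • R (conj w) (φv ζ) - φv ζ
            = (conj w - ζ) • R (conj w) (φv ζ) by abel]
        rw [smul_smul, inv_mul_cancel₀ hcwζ, one_smul]
      have E := E1 (φv ζ)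
      rw [hR, smul_smul, inner_smul_right, inner_sub_right] at E
      have hq1 := hq ζ hζ hζI
      have hq2 := hq (conj w) hcw hcwI
      rw [hφφI] at hq1 hq2
      rw [E, ← hq1, ← hq2]
      have h1 : (ζ + Complex.I : ℂ) ≠ 0 := by
        intro h; apply hζI; linear_combination h
      have h2 : (conj w + Complex.I : ℂ) ≠ 0 := by
        intro h; apply hcwI; linear_combination h
      have h3 : (ζ - conj w : ℂ) ≠ 0 := sub_ne_zero.mpr hne
      field_simp
      ring
end

section
/- Let A be a self-adjoint operator on a Hilbert space H, φ, v ∈ H, q : ρ(A) → ℂ a function satisfying the Q-function identity (q(ζ) - q(conj w))/(ζ - conj w) = ⟨φ_v(ζ), φ_φ(w)⟩, c ∈ ℂ with q + c not identically zero, and for z ∈ ρ(A) with q(z) + c ≠ 0 define T(z)f = (A - z)⁻¹f - (⟨f, φ_φ(conj z)⟩/(q(z) + c))·φ_v(z). Then T satisfies the resolvent identity (w - z)·T(w)T(z) = T(w) - T(z) on its domain of definition. -/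
open ComplexConjugate

/-- The perturbed resolvent
`T(z) f = (A - z)⁻¹ f - (⟨f, φ_φ(conj z)⟩/(q(z) + c)) φ_v(z)`
satisfies the resolvent identity `(w - z) T(w) T(z) = T(w) - T(z)` wherever it is
defined.  The self-adjoint operator `A` is encoded by its resolvent family `R` on the
conjugation-invariant resolvent set `ρ ∋ i`, satisfying the resolvent identity and
`((A - w)⁻¹)* = (A - conj w)⁻¹`; `φ_x` is the φ-field of `x`; `q` satisfies the
Q-function identity `q(ζ) - q(conj w) = (ζ - conj w)·⟨φ_v(ζ), φ_φ(w)⟩`; the paper's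
inner product `⟨x, y⟩`, conjugate-linear in the second argument, is Mathlib's `⟪y, x⟫`. -/
theorem stmt10 {H : Type*} [NormedAddCommGroup H] [InnerProductSpace ℂ H] [CompleteSpace H]
    (ρ : Set ℂ) (R : ℂ → H →L[ℂ] H)
    (hres : ∀ w ∈ ρ, ∀ z ∈ ρ, (w - z) • (R w ∘L R z) = R w - R z)
    (hconj : ∀ w ∈ ρ, (conj w : ℂ) ∈ ρ)
    (hadj : ∀ w ∈ ρ, ContinuousLinearMap.adjoint (R w) = R (conj w))
    (hi : Complex.I ∈ ρ)
    (v φ₀ : H) (φv φφ : ℂ → H)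
    (hφv : ∀ w ∈ ρ, φv w = v + (w - Complex.I) • R w v)
    (hφφ : ∀ w ∈ ρ, φφ w = φ₀ + (w - Complex.I) • R w φ₀)
    (q : ℂ → ℂ)
    (hq : ∀ ζ ∈ ρ, ∀ w ∈ ρ,
      q ζ - q (conj w) = (ζ - conj w) * (inner ℂ (φφ w) (φv ζ) : ℂ))
    (c : ℂ) (hc : ∃ ζ ∈ ρ, q ζ + c ≠ 0)
    (T : ℂ → H → H)
    (hT : ∀ z ∈ ρ, ∀ f : H,
      T z f = R z f - ((q z + c)⁻¹ * (inner ℂ (φφ (conj z)) f : ℂ)) • φv z) :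
    ∀ w ∈ ρ, ∀ z ∈ ρ, q w + c ≠ 0 → q z + c ≠ 0 → ∀ f : H,
      (w - z) • T w (T z f) = T w f - T z f := by
  intro w hw z hz hqw hqz f
  have hwc := hconj w hw
  have hzc := hconj z hz
  by_cases hwz : w = z
  · subst hwz; simp
  have hne : w - z ≠ 0 := sub_ne_zero.mpr hwz
  have hne' : z - w ≠ 0 := sub_ne_zero.mpr (Ne.symm hwz)
  have hnec : (conj z : ℂ) - conj w ≠ 0 := by
    intro h
    apply hne'
    have := congrArg conj h
    simpa [map_sub] using this
  -- generic φ-field identity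
  have hfield : ∀ (x : H) (φx : ℂ → H), (∀ u ∈ ρ, φx u = x + (u - Complex.I) • R u x) →
      ∀ a ∈ ρ, ∀ b ∈ ρ, a - b ≠ 0 → R a (φx b) = (a - b)⁻¹ • (φx a - φx b) := by
    intro x φx hφ a ha b hb hab
    have h2 : R a (R b x) = (a - b)⁻¹ • (R a x - R b x) := by
      have h := congrArg (fun S => S x) (hres a ha b hb)
      simp only [ContinuousLinearMap.smul_apply, ContinuousLinearMap.coe_comp',
        Function.comp_apply, ContinuousLinearMap.sub_apply] at h
      rw [← h, smul_smul, inv_mul_cancel₀ hab, one_smul]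
    rw [hφ a ha, hφ b hb]
    simp only [map_add, map_smul, h2]
    match_scalars <;> (try field_simp [hab]) <;> ring
  have h1 : R w (R z f) = (w - z)⁻¹ • (R w f - R z f) := by
    have h := congrArg (fun S => S f) (hres w hw z hz)
    simp only [ContinuousLinearMap.smul_apply, ContinuousLinearMap.coe_comp',
      Function.comp_apply, ContinuousLinearMap.sub_apply] at h
    rw [← h, smul_smul, inv_mul_cancel₀ hne, one_smul]
  have h2 : R w (φv z) = (w - z)⁻¹ • (φv w - φv z) :=
    hfield v φv hφv w hw z hz hne
  have h3 : R (conj z) (φφ (conj w)) =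
      ((conj z : ℂ) - conj w)⁻¹ • (φφ (conj z) - φφ (conj w)) :=
    hfield φ₀ φφ hφφ (conj z) hzc (conj w) hwc hnec
  have h4 : (inner ℂ (φφ (conj w)) (R z f) : ℂ)
      = (z - w)⁻¹ * ((inner ℂ (φφ (conj z)) f : ℂ) - (inner ℂ (φφ (conj w)) f : ℂ)) := by
    rw [← ContinuousLinearMap.adjoint_inner_left, hadj z hz, h3, inner_smul_left,
      inner_sub_left]
    simp [map_inv₀]
  have h5 : (inner ℂ (φφ (conj w)) (φv z) : ℂ) = (z - w)⁻¹ * ((q z + c) - (q w + c)) := by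
    have h := hq z hz (conj w) hwc
    rw [Complex.conj_conj] at h
    field_simp
    linear_combination -h
  simp only [hT z hz, hT w hw]
  simp only [map_sub, map_smul, inner_sub_right, inner_smul_right, h1, h2, h4, h5]
  have hzw : (z - w)⁻¹ = -(w - z)⁻¹ := by rw [← neg_sub w z, inv_neg]
  simp only [hzw]
  obtain ⟨Qw, hQw⟩ : ∃ x : ℂ, x = q w + c := ⟨_, rfl⟩
  obtain ⟨Qz, hQz⟩ : ∃ x : ℂ, x = q z + c := ⟨_, rfl⟩
  rw [← hQw] at hqw ⊢
  rw [← hQz] at hqz ⊢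
  obtain ⟨s, hs⟩ : ∃ x : ℂ, x = w - z := ⟨_, rfl⟩
  rw [← hs] at hne ⊢
  match_scalars
  any_goals ring
  any_goals (field_simp [hne, hqw, hqz]; try ring)
  all_goals field_simp [hne, hqw, hqz]
end

section
/- In the setting of the perturbed resolvent T(z)f = (A - z)⁻¹f - k(z,f)·φ_v(z) with k(z,f) = ⟨f, φ_φ(conj z)⟩/(q(z)+c), the scalar function k satisfies the resolvent-type identity (w - z)·k(w, T(z)f) = k(w,f) - k(z,f) for all f ∈ H and all w, z ∈ ρ(A) with q(w)+c ≠ 0 and q(z)+c ≠ 0. -/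
open ComplexConjugate

/-- The scalar function `k(z, f) = ⟨f, φ_φ(conj z)⟩/(q(z) + c)` attached to the
perturbed resolvent `T(z) f = (A - z)⁻¹ f - k(z, f)·φ_v(z)` satisfies the
resolvent-type identity `(w - z)·k(w, T(z) f) = k(w, f) - k(z, f)`.  The self-adjoint
operator `A` is encoded by its resolvent family `R` on the conjugation-invariant
resolvent set `ρ ∋ i`, satisfying the resolvent identity and
`((A - w)⁻¹)* = (A - conj w)⁻¹`; the paper's inner product `⟨x, y⟩`, conjugate-linear in
the second argument, is Mathlib's `⟪y, x⟫`. -/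
theorem stmt11 {H : Type*} [NormedAddCommGroup H] [InnerProductSpace ℂ H] [CompleteSpace H]
    (ρ : Set ℂ) (R : ℂ → H →L[ℂ] H)
    (hres : ∀ w ∈ ρ, ∀ z ∈ ρ, (w - z) • (R w ∘L R z) = R w - R z)
    (hconj : ∀ w ∈ ρ, (conj w : ℂ) ∈ ρ)
    (hadj : ∀ w ∈ ρ, ContinuousLinearMap.adjoint (R w) = R (conj w))
    (hi : Complex.I ∈ ρ)
    (v φ₀ : H) (φv φφ : ℂ → H)
    (hφv : ∀ w ∈ ρ, φv w = v + (w - Complex.I) • R w v)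
    (hφφ : ∀ w ∈ ρ, φφ w = φ₀ + (w - Complex.I) • R w φ₀)
    (q : ℂ → ℂ)
    (hq : ∀ ζ ∈ ρ, ∀ w ∈ ρ,
      q ζ - q (conj w) = (ζ - conj w) * (inner ℂ (φφ w) (φv ζ) : ℂ))
    (c : ℂ)
    (k : ℂ → H → ℂ)
    (hk : ∀ z ∈ ρ, ∀ f : H, k z f = (inner ℂ (φφ (conj z)) f : ℂ) / (q z + c))
    (T : ℂ → H → H)
    (hT : ∀ z ∈ ρ, ∀ f : H, T z f = R z f - k z f • φv z) :
    ∀ w ∈ ρ, ∀ z ∈ ρ, q w + c ≠ 0 → q z + c ≠ 0 → ∀ f : H,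
      (w - z) * k w (T z f) = k w f - k z f := by
  intro w hw z hz hqw hqz f
  by_cases hwz : w = z
  · subst hwz; simp
  have hcw : (conj w : ℂ) ∈ ρ := hconj w hw
  have hcz : (conj z : ℂ) ∈ ρ := hconj z hz
  have hzw : z - w ≠ 0 := sub_ne_zero.mpr (Ne.symm hwz)
  have key : (conj z - conj w) • R (conj z) (φφ (conj w)) = φφ (conj z) - φφ (conj w) := by
    have h1 : (conj z - conj w) • R (conj z) (R (conj w) φ₀)
        = R (conj z) φ₀ - R (conj w) φ₀ := by
      have := congrArg (fun (S : H →L[ℂ] H) => S φ₀) (hres (conj z) hcz (conj w) hcw)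
      simpa using this
    rw [hφφ (conj w) hcw, hφφ (conj z) hcz]
    rw [map_add, map_smul, smul_add, smul_comm, h1]
    module
  have hB : (z - w) * (inner ℂ (R (conj z) (φφ (conj w))) f : ℂ)
      = (inner ℂ (φφ (conj z)) f : ℂ) - inner ℂ (φφ (conj w)) f := by
    have := congrArg (fun x => (inner ℂ x f : ℂ)) key
    simpa [inner_smul_left, inner_sub_left, map_sub, mul_comm] using this
  have hPval : (inner ℂ (R (conj z) (φφ (conj w))) f : ℂ)
      = ((inner ℂ (φφ (conj z)) f : ℂ) - inner ℂ (φφ (conj w)) f) / (z - w) :=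
    (eq_div_iff hzw).mpr (by rw [mul_comm]; exact hB)
  have hC : q z - q w = (z - w) * (inner ℂ (φφ (conj w)) (φv z) : ℂ) := by
    have := hq z hz (conj w) hcw
    simpa using this
  have hQval : (inner ℂ (φφ (conj w)) (φv z) : ℂ) = (q z - q w) / (z - w) :=
    (eq_div_iff hzw).mpr (by rw [mul_comm]; exact hC.symm)
  have hA : (inner ℂ (φφ (conj w)) (R z f) : ℂ)
      = inner ℂ (R (conj z) (φφ (conj w))) f := by
    rw [← hadj z hz, ContinuousLinearMap.adjoint_inner_left]
  rw [hk w hw (T z f), hT z hz f, inner_sub_right, inner_smul_right, hA,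
    hPval, hQval, hk z hz f, hk w hw f]
  field_simp
  ring
end
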